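/- Let 𝒳 be an affine subset of a vector space X with direction subspace X₀, J: 𝒳 → ℝ^d, C ⊆ ℝ^d a nonempty closed convex cone with C ≠ ℝ^d, and J̄(y) = J(y) + C. If M ⊆ 𝒳 is an infimizer, i.e., cl ⋃_{y∈M} J̄(y) = cl ⋃_{y∈𝒳} J̄(y), then for every ζ ∈ C⁺ \ {0}, the point 0 ∈ X₀ is a minimizer of φ_{ζ,M}(v) = inf_{y∈M} ζ·J(y+v) over X₀. -/

import Mathlib

open Pointwise

/-- Lemma 3.1, first part: if `M ⊆ 𝒳` is an infimizer, i.e.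
`cl ⋃_{y∈M} (J(y)+C) = cl ⋃_{y∈𝒳} (J(y)+C)`, then for every `ζ ∈ C⁺ \ {0}` the point
`0 ∈ X₀` minimizes `φ_{ζ,M}(v) = inf_{y∈M} ζ·J(y+v)` over the direction subspace `X₀`. -/
theorem stmt7 {d : ℕ} {X : Type*} [AddCommGroup X] [Module ℝ X]
    (C : Set (EuclideanSpace ℝ (Fin d)))
    (hCne : C.Nonempty) (hCclosed : IsClosed C) (hCconv : Convex ℝ C)
    (hCcone : ∀ c ∈ C, ∀ s : ℝ, 0 ≤ s → s • c ∈ C)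
    (hCproper : C ≠ Set.univ)
    (X0 : Submodule ℝ X) (𝒳 : Set X)
    (h𝒳add : ∀ y ∈ 𝒳, ∀ v ∈ X0, y + v ∈ 𝒳)
    (h𝒳sub : ∀ y₁ ∈ 𝒳, ∀ y₂ ∈ 𝒳, y₁ - y₂ ∈ X0)
    (J : X → EuclideanSpace ℝ (Fin d))
    (M : Set X) (hM : M ⊆ 𝒳) (hMne : M.Nonempty)
    (hinf : closure (⋃ y ∈ M, ({J y} + C)) = closure (⋃ y ∈ 𝒳, ({J y} + C))) :
    ∀ ζ : EuclideanSpace ℝ (Fin d), (∀ c ∈ C, 0 ≤ (inner ℝ ζ c : ℝ)) → ζ ≠ 0 →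
      ∀ v ∈ X0,
        sInf ((fun y => ((inner ℝ ζ (J y) : ℝ) : EReal)) '' M) ≤
          sInf ((fun y => ((inner ℝ ζ (J (y + v)) : ℝ) : EReal)) '' M) := by
  intro ζ hζ hζ0 v hv
  set a : EReal := sInf ((fun y => ((inner ℝ ζ (J y) : ℝ) : EReal)) '' M) with ha
  -- 0 ∈ C
  obtain ⟨c₀, hc₀⟩ := hCne
  have h0C : (0 : EuclideanSpace ℝ (Fin d)) ∈ C := by
    simpa using hCcone c₀ hc₀ 0 le_rfl
  -- the closed set where a ≤ ζ·x
  set T : Set (EuclideanSpace ℝ (Fin d)) :=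
    {x | a ≤ ((inner ℝ ζ x : ℝ) : EReal)} with hT
  have hTclosed : IsClosed T := by
    have hc : Continuous fun x : EuclideanSpace ℝ (Fin d) =>
        ((inner ℝ ζ x : ℝ) : EReal) :=
      continuous_coe_real_ereal.comp (continuous_const.inner continuous_id)
    exact isClosed_le continuous_const hc
  have hsub : (⋃ y ∈ M, ({J y} + C)) ⊆ T := by
    rintro x hx
    simp only [Set.mem_iUnion] at hx
    obtain ⟨y, hy, hx⟩ := hx
    obtain ⟨j, hj, c, hc, rfl⟩ := hx
    simp only [Set.mem_singleton_iff] at hj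
    subst hj
    have h1 : a ≤ ((inner ℝ ζ (J y) : ℝ) : EReal) :=
      sInf_le ⟨y, hy, rfl⟩
    have h2 : (inner ℝ ζ (J y) : ℝ) ≤ inner ℝ ζ (J y + c) := by
      rw [inner_add_right]
      linarith [hζ c hc]
    exact h1.trans (by exact_mod_cast h2)
  have hclT : closure (⋃ y ∈ M, ({J y} + C)) ⊆ T :=
    closure_minimal hsub hTclosed
  refine le_sInf ?_
  rintro b ⟨y, hy, rfl⟩
  have hmem : J (y + v) ∈ closure (⋃ y ∈ M, ({J y} + C)) := by
    rw [hinf]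
    refine subset_closure ?_
    simp only [Set.mem_iUnion]
    exact ⟨y + v, h𝒳add y (hM hy) v hv,
      ⟨J (y + v), rfl, 0, h0C, by simp⟩⟩
  exact hclT hmem
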